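/- Let 1 < p ≤ q, a ≥ 0, 0 < ν ≤ L, and set H(s) = s^p + a·s^q. Let A : ℝ^{N×n} → ℝ^{N×n} be differentiable and satisfy, for all ξ, λ ∈ ℝ^{N×n}: |A(ξ)| + (1+|ξ|)·|DA(ξ)| ≤ L·H'(1+|ξ|) and [DA(ξ)λ] : λ ≥ ν·H''(1+|ξ|)·|λ|². Then there is a constant c = c(p,q,ν,L) ≥ 1 such that for all P, Q ∈ ℝ^{N×n}: c⁻¹·H'_{1+|Q|}(|P−Q|) ≤ |A(P) − A(Q)| ≤ c·H'_{1+|Q|}(|P−Q|), where H_σ is the shifted N-function of H with shift σ, i.e. H_σ'(s) = H'(σ+s)·s/(σ+s). -/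

import Mathlib

open MeasureTheory Real Set
open scoped InnerProductSpace

/-- First derivative `H'(s) = p·s^{p−1} + a·q·s^{q−1}` of the double phase function
`H(s) = s^p + a·s^q`. -/
noncomputable def dpH' (p q a s : ℝ) : ℝ :=
  p * s ^ (p - 1) + a * q * s ^ (q - 1)

/-- Second derivative `H''(s) = p(p−1)s^{p−2} + a·q(q−1)s^{q−2}`. -/
noncomputable def dpH'' (p q a s : ℝ) : ℝ :=
  p * (p - 1) * s ^ (p - 2) + a * q * (q - 1) * s ^ (q - 2)

open intervalIntegral

section scalar
variable {p q a : ℝ}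

lemma dpH'_nonneg (hp : 1 < p) (hpq : p ≤ q) (ha : 0 ≤ a) {x : ℝ} (hx : 0 ≤ x) :
    0 ≤ dpH' p q a x := by
  have h1 : (0:ℝ) ≤ x ^ (p-1) := Real.rpow_nonneg hx _
  have h2 : (0:ℝ) ≤ x ^ (q-1) := Real.rpow_nonneg hx _
  have hq : 1 < q := lt_of_lt_of_le hp hpq
  unfold dpH'
  have := mul_nonneg (by linarith : (0:ℝ) ≤ p) h1
  have := mul_nonneg (mul_nonneg ha (by linarith : (0:ℝ) ≤ q)) h2
  linarith

lemma dpH''_nonneg (hp : 1 < p) (hpq : p ≤ q) (ha : 0 ≤ a) {x : ℝ} (hx : 0 ≤ x) :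
    0 ≤ dpH'' p q a x := by
  have h1 : (0:ℝ) ≤ x ^ (p-2) := Real.rpow_nonneg hx _
  have h2 : (0:ℝ) ≤ x ^ (q-2) := Real.rpow_nonneg hx _
  have hq : 1 < q := lt_of_lt_of_le hp hpq
  unfold dpH''
  have := mul_nonneg (mul_nonneg (by linarith : (0:ℝ) ≤ p) (by linarith : (0:ℝ) ≤ p-1)) h1
  have := mul_nonneg (mul_nonneg (mul_nonneg ha (by linarith : (0:ℝ) ≤ q)) (by linarith : (0:ℝ) ≤ q-1)) h2
  linarith

lemma dpH'_mono (hp : 1 < p) (hpq : p ≤ q) (ha : 0 ≤ a) {x y : ℝ} (hx : 0 ≤ x)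
    (hxy : x ≤ y) : dpH' p q a x ≤ dpH' p q a y := by
  have hq : 1 < q := lt_of_lt_of_le hp hpq
  have h1 : x ^ (p-1) ≤ y ^ (p-1) := Real.rpow_le_rpow hx hxy (by linarith)
  have h2 : x ^ (q-1) ≤ y ^ (q-1) := Real.rpow_le_rpow hx hxy (by linarith)
  unfold dpH'
  have := mul_le_mul_of_nonneg_left h1 (by linarith : (0:ℝ) ≤ p)
  have := mul_le_mul_of_nonneg_left h2 (mul_nonneg ha (by linarith : (0:ℝ) ≤ q))
  linarith

lemma dpH'_le_mul_dpH'' (hp : 1 < p) (hpq : p ≤ q) (ha : 0 ≤ a) {x : ℝ} (hx : 0 < x) :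
    (p - 1) * dpH' p q a x ≤ x * dpH'' p q a x := by
  have hq : 1 < q := lt_of_lt_of_le hp hpq
  have e1 : x * x ^ (p-2) = x ^ (p-1) := by
    rw [← Real.rpow_one_add' (le_of_lt hx) (by intro h; nlinarith)]
    ring_nf
  have e2 : x * x ^ (q-2) = x ^ (q-1) := by
    rw [← Real.rpow_one_add' (le_of_lt hx) (by intro h; nlinarith)]
    ring_nf
  have h2 : (0:ℝ) ≤ x ^ (q-1) := Real.rpow_nonneg hx.le _
  unfold dpH' dpH''
  have : x * (p * (p-1) * x ^ (p-2) + a * q * (q-1) * x ^ (q-2))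
      = p * (p-1) * x ^ (p-1) + a * q * (q-1) * x ^ (q-1) := by
    rw [mul_add]; rw [show x * (p * (p-1) * x ^ (p-2)) = p*(p-1)*(x * x^(p-2)) by ring,
      show x * (a * q * (q-1) * x ^ (q-2)) = a*q*(q-1)*(x * x^(q-2)) by ring, e1, e2]
  rw [this]
  have h3 : (0:ℝ) ≤ a * q * (q - p) * x ^ (q-1) :=
    mul_nonneg (mul_nonneg (mul_nonneg ha (by linarith)) (by linarith)) h2
  nlinarith

lemma mono_lower {e q x y : ℝ} (he1 : 1 < e) (heq : e ≤ q) (hy : 0 < y)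
    (h1 : y / 12 ≤ x) (h2 : x ≤ y) : 12 ^ (-q) * y ^ (e - 2) ≤ x ^ (e - 2) := by
  have hx : 0 < x := lt_of_lt_of_le (by positivity) h1
  have hyn : (0:ℝ) ≤ y ^ (e-2) := Real.rpow_nonneg hy.le _
  rcases le_or_gt 2 e with h | h
  · have key : (y / 12) ^ (e-2) ≤ x ^ (e-2) := Real.rpow_le_rpow (by positivity) h1 (by linarith)
    have expand : (y/12 : ℝ) ^ (e-2) = y ^ (e-2) * 12 ^ (-(e-2)) := by
      rw [Real.div_rpow hy.le (by norm_num), Real.rpow_neg (by norm_num)]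
      ring
    have h12 : (12:ℝ) ^ (-q) ≤ 12 ^ (-(e-2)) :=
      Real.rpow_le_rpow_of_exponent_le (by norm_num) (by linarith)
    calc 12 ^ (-q) * y ^ (e-2) ≤ 12 ^ (-(e-2)) * y ^ (e-2) := by nlinarith
      _ = (y/12) ^ (e-2) := by rw [expand]; ring
      _ ≤ x ^ (e-2) := key
  · have key : y ^ (e-2) ≤ x ^ (e-2) := Real.rpow_le_rpow_of_nonpos hx h2 (by linarith)
    have h12 : (12:ℝ) ^ (-q) ≤ 1 := by
      apply Real.rpow_le_one_of_one_le_of_nonpos (by norm_num) (by linarith)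
    nlinarith

lemma mono_upper3 {e x y : ℝ} (he1 : 1 < e) (hy : 0 < y)
    (h1 : y / 3 ≤ x) (h2 : x ≤ y) : x ^ (e - 2) ≤ 3 * y ^ (e - 2) := by
  have hx : 0 < x := lt_of_lt_of_le (by positivity) h1
  have hyn : (0:ℝ) ≤ y ^ (e-2) := Real.rpow_nonneg hy.le _
  rcases le_or_gt 2 e with h | h
  · have key : x ^ (e-2) ≤ y ^ (e-2) := Real.rpow_le_rpow hx.le h2 (by linarith)
    nlinarith
  · have key : x ^ (e-2) ≤ (y/3) ^ (e-2) := Real.rpow_le_rpow_of_nonpos (by positivity) h1 (by linarith)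
    have expand : (y/3 : ℝ) ^ (e-2) = y ^ (e-2) * 3 ^ (-(e-2)) := by
      rw [Real.div_rpow hy.le (by norm_num), Real.rpow_neg (by norm_num)]
      ring
    have h3 : (3:ℝ) ^ (-(e-2)) ≤ 3 ^ (1:ℝ) :=
      Real.rpow_le_rpow_of_exponent_le (by norm_num) (by linarith)
    rw [Real.rpow_one] at h3
    nlinarith

lemma dpH''_lower (hp : 1 < p) (hpq : p ≤ q) (ha : 0 ≤ a) {x y : ℝ} (hy : 0 < y)
    (h1 : y / 12 ≤ x) (h2 : x ≤ y) :
    12 ^ (-q) * dpH'' p q a y ≤ dpH'' p q a x := by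
  have hq : 1 < q := lt_of_lt_of_le hp hpq
  have m1 := mono_lower hp hpq hy h1 h2
  have m2 := mono_lower hq (le_refl q) hy h1 h2
  unfold dpH''
  have c1 : (0:ℝ) ≤ p * (p-1) := mul_nonneg (by linarith) (by linarith)
  have c2 : (0:ℝ) ≤ a * q * (q-1) := mul_nonneg (mul_nonneg ha (by linarith)) (by linarith)
  have t1 := mul_le_mul_of_nonneg_left m1 c1
  have t2 := mul_le_mul_of_nonneg_left m2 c2
  ring_nf
  ring_nf at t1 t2
  linarith
end scalar

section intlemma

lemma cont_aux {r s b : ℝ} (hs : 0 ≤ s) :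
    Continuous (fun u : ℝ => (1 + |u - b| * s) ^ r) := by
  apply Continuous.rpow_const
  · exact continuous_const.add (((continuous_id.sub continuous_const).abs).mul continuous_const)
  · intro u
    left
    have : 0 ≤ |u - b| * s := mul_nonneg (abs_nonneg _) hs
    positivity

lemma integral_pos_side {r s : ℝ} (hr1 : -1 < r) (hr0 : r < 0) (hs : 0 < s) :
    ∫ t in (0:ℝ)..3, (1 + t * s) ^ r = ((1 + 3*s) ^ (r+1) - 1) / (s * (r+1)) := by
  have hsr0 : 0 < s * (r+1) := mul_pos hs (by linarith)
  have hsr : s * (r+1) ≠ 0 := ne_of_gt hsr0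
  have key : ∀ t ∈ Set.uIcc (0:ℝ) 3,
      HasDerivAt (fun u : ℝ => (1 + u * s) ^ (r+1) / (s * (r+1))) ((1 + t * s) ^ r) t := by
    intro t ht
    rw [Set.uIcc_of_le (by norm_num)] at ht
    have hbase : (0:ℝ) < 1 + t * s := by nlinarith [ht.1]
    have h1 : HasDerivAt (fun u : ℝ => 1 + u * s) s t := by
      simpa using ((hasDerivAt_id t).mul_const s).const_add 1
    have h2 : HasDerivAt (fun x : ℝ => x ^ (r+1)) ((r+1) * (1 + t*s) ^ (r+1-1)) (1 + t*s) :=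
      Real.hasDerivAt_rpow_const (Or.inl (ne_of_gt hbase))
    have h3 := (h2.comp t h1).div_const (s * (r+1))
    refine HasDerivAt.congr_deriv h3 ?_
    rw [show r + 1 - 1 = r by ring, div_eq_iff hsr]
    ring
  rw [integral_eq_sub_of_hasDerivAt key]
  · have hs' : s ≠ 0 := ne_of_gt hs
    have hr' : r + 1 ≠ 0 := by linarith
    norm_num [Real.one_rpow]
    field_simp
  · apply ContinuousOn.intervalIntegrable
    apply ContinuousOn.rpow_const
    · exact (continuous_const.add (continuous_id.mul continuous_const)).continuousOn
    · intro u hu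
      rw [Set.uIcc_of_le (by norm_num)] at hu
      left
      nlinarith [hu.1]

lemma integral_neg_side {r s : ℝ} (hr1 : -1 < r) (hr0 : r < 0) (hs : 0 < s) :
    ∫ t in (-3:ℝ)..0, (1 - t * s) ^ r = ((1 + 3*s) ^ (r+1) - 1) / (s * (r+1)) := by
  have h := intervalIntegral.integral_comp_neg (a := (-3:ℝ)) (b := 0) (fun x => (1 + x * s) ^ r)
  simp only [neg_zero, neg_neg] at h
  rw [← integral_pos_side hr1 hr0 hs, ← h]
  apply intervalIntegral.integral_congr
  intro u hu
  simp only []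
  congr 1
  ring

lemma integral_abs_rpow_le {r s b : ℝ} (hr1 : -1 < r) (hr0 : r < 0) (hs : 0 < s)
    (hb : |b| ≤ 2) :
    ∫ t in (0:ℝ)..1, (1 + |t - b| * s) ^ r ≤ 2 * (1 + 3*s) ^ (r+1) / (s * (r+1)) := by
  have hcont := cont_aux (r := r) (s := s) (b := 0) hs.le
  have hb' : -2 ≤ b ∧ b ≤ 2 := abs_le.mp hb
  have step1 : ∫ t in (0:ℝ)..1, (1 + |t - b| * s) ^ r
      = ∫ u in (0:ℝ)-b..(1:ℝ)-b, (1 + |u| * s) ^ r := by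
    rw [← intervalIntegral.integral_comp_sub_right (fun u => (1 + |u| * s) ^ r) b]
  have hint3 : IntervalIntegrable (fun u : ℝ => (1 + |u| * s) ^ r) volume (-3) 3 := by
    apply Continuous.intervalIntegrable
    simpa using hcont
  have step2 : ∫ u in (0:ℝ)-b..(1:ℝ)-b, (1 + |u| * s) ^ r
      ≤ ∫ u in (-3:ℝ)..3, (1 + |u| * s) ^ r := by
    apply intervalIntegral.integral_mono_interval (by linarith [hb'.1, hb'.2])
      (by linarith) (by linarith [hb'.1, hb'.2])
    · filter_upwards with u
      have : 0 ≤ |u| * s := by positivity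
      positivity
    · exact hint3
  have split : ∫ u in (-3:ℝ)..3, (1 + |u| * s) ^ r
      = (∫ u in (-3:ℝ)..0, (1 + |u| * s) ^ r) + ∫ u in (0:ℝ)..3, (1 + |u| * s) ^ r :=
    (intervalIntegral.integral_add_adjacent_intervals
      (hint3.mono_set (by rw [Set.uIcc_of_le, Set.uIcc_of_le] <;> norm_num
                          exact Set.Icc_subset_Icc (by norm_num) (by norm_num)))
      (hint3.mono_set (by rw [Set.uIcc_of_le, Set.uIcc_of_le] <;> norm_num
                          exact Set.Icc_subset_Icc (by norm_num) (by norm_num)))).symm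
  have eq1 : ∫ u in (-3:ℝ)..0, (1 + |u| * s) ^ r = ∫ u in (-3:ℝ)..0, (1 - u * s) ^ r := by
    apply intervalIntegral.integral_congr
    intro u hu
    rw [Set.uIcc_of_le (by norm_num)] at hu
    simp only []
    rw [abs_of_nonpos hu.2]
    congr 1
    ring
  have eq2 : ∫ u in (0:ℝ)..3, (1 + |u| * s) ^ r = ∫ u in (0:ℝ)..3, (1 + u * s) ^ r := by
    apply intervalIntegral.integral_congr
    intro u hu
    rw [Set.uIcc_of_le (by norm_num)] at hu
    simp only []
    rw [abs_of_nonneg hu.1]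
  have hsr : 0 < s * (r + 1) := mul_pos hs (by linarith)
  have hfin : ((1 + 3*s) ^ (r+1) - 1) / (s * (r+1)) ≤ (1 + 3*s) ^ (r+1) / (s * (r+1)) :=
    (div_le_div_iff_of_pos_right hsr).mpr (by linarith)
  calc ∫ t in (0:ℝ)..1, (1 + |t - b| * s) ^ r
      ≤ ∫ u in (-3:ℝ)..3, (1 + |u| * s) ^ r := by rw [step1]; exact step2
    _ = ((1 + 3*s) ^ (r+1) - 1) / (s * (r+1)) + ((1 + 3*s) ^ (r+1) - 1) / (s * (r+1)) := by
        rw [split, eq1, eq2, integral_neg_side hr1 hr0 hs, integral_pos_side hr1 hr0 hs]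
    _ ≤ 2 * (1 + 3*s) ^ (r+1) / (s * (r+1)) := by
        rw [show 2 * (1 + 3*s) ^ (r+1) / (s * (r+1))
          = (1 + 3*s) ^ (r+1) / (s * (r+1)) + (1 + 3*s) ^ (r+1) / (s * (r+1)) by ring]
        exact add_le_add hfin hfin

end intlemma

variable {E : Type*} [NormedAddCommGroup E] [InnerProductSpace ℝ E]

lemma proj_lower (Q lam : E) (hs : 0 < ‖lam‖) (t : ℝ) :
    |t - (-(⟪Q, lam⟫_ℝ) / ‖lam‖ ^ 2)| * ‖lam‖ ≤ ‖Q + t • lam‖ := by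
  set s := ‖lam‖
  set i := ⟪Q, lam⟫_ℝ
  set b := -i / s ^ 2
  have hCS : i ^ 2 ≤ ‖Q‖ ^ 2 * s ^ 2 := by
    have h := abs_real_inner_le_norm Q lam
    nlinarith [abs_nonneg i, sq_abs i, abs_le.mp (le_refl |i|)]
  have hsq : (|t - b| * s) ^ 2 ≤ ‖Q + t • lam‖ ^ 2 := by
    have hnorm : ‖Q + t • lam‖ ^ 2 = ‖Q‖ ^ 2 + 2 * (t * i) + t ^ 2 * s ^ 2 := by
      rw [norm_add_sq_real, real_inner_smul_right, norm_smul]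
      simp only [mul_pow, Real.norm_eq_abs, sq_abs]
      rfl
    have hexp : (|t - b| * s) ^ 2 = t ^ 2 * s ^ 2 + 2 * (t * i) + i ^ 2 / s ^ 2 := by
      rw [mul_pow, sq_abs]
      have : (t - b) ^ 2 = t ^ 2 + 2 * t * (i / s ^ 2) + (i / s ^ 2) ^ 2 := by
        rw [show b = -i/s^2 from rfl]; ring
      rw [this]
      field_simp
    have hdiv : i ^ 2 / s ^ 2 ≤ ‖Q‖ ^ 2 := by
      rw [div_le_iff₀ (by positivity)]
      linarith
    rw [hnorm, hexp]
    linarith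
  have h1 : 0 ≤ |t - b| * s := by positivity
  nlinarith [norm_nonneg (Q + t • lam)]

lemma UP {p e s σ y : ℝ} {x : ℝ → ℝ} (hp : 1 < p) (hpe : p ≤ e)
    (hσ : 1 ≤ σ) (hs : 0 < s) (hy : y = σ + s)
    (hcont : Continuous x) (hx1 : ∀ t, 1 ≤ x t) (hxley : ∀ t ∈ Icc (0:ℝ) 1, x t ≤ y)
    (hlow : ∀ t ∈ Icc (0:ℝ) 1, σ - s ≤ x t)
    (hproj : ∃ b : ℝ, ∀ t, 1 + |t - b| * s ≤ x t) :
    ∫ t in (0:ℝ)..1, (x t) ^ (e - 2) ≤ (3 + 30 / (p - 1)) * y ^ (e - 2) := by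
  have he1 : 1 < e := lt_of_lt_of_le hp hpe
  have hC3 : (3:ℝ) ≤ 3 + 30 / (p - 1) := by
    have : (0:ℝ) ≤ 30 / (p-1) := div_nonneg (by norm_num) (by linarith)
    linarith
  have hy0 : 0 < y := by rw [hy]; linarith
  have hyr : (0:ℝ) ≤ y ^ (e - 2) := Real.rpow_nonneg hy0.le _
  have hxpos : ∀ t, (0:ℝ) < x t := fun t => lt_of_lt_of_le one_pos (hx1 t)
  have hInt : IntervalIntegrable (fun t => x t ^ (e - 2)) volume 0 1 :=
    (hcont.rpow_const (fun t => Or.inl (ne_of_gt (hxpos t)))).intervalIntegrable 0 1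
  have finish : ∀ K : ℝ, K ≤ 3 + 30 / (p - 1) →
      (∀ t ∈ Icc (0:ℝ) 1, x t ^ (e - 2) ≤ K * y ^ (e - 2)) →
      ∫ t in (0:ℝ)..1, (x t) ^ (e - 2) ≤ (3 + 30 / (p - 1)) * y ^ (e - 2) := by
    intro K hK hpt
    calc ∫ t in (0:ℝ)..1, (x t) ^ (e - 2)
        ≤ ∫ _t in (0:ℝ)..1, K * y ^ (e - 2) :=
          intervalIntegral.integral_mono_on (by norm_num) hInt
            intervalIntegrable_const hpt
      _ = K * y ^ (e - 2) := by simp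
      _ ≤ (3 + 30 / (p - 1)) * y ^ (e - 2) := by nlinarith
  rcases le_or_gt 2 e with h2e | h2e
  · apply finish 1 (by linarith)
    intro t ht
    rw [one_mul]
    exact Real.rpow_le_rpow (hxpos t).le (hxley t ht) (by linarith)
  rcases le_or_gt (2 * s) σ with hcase | hcase
  · -- s small: pointwise
    apply finish 3 (by linarith)
    intro t ht
    exact mono_upper3 he1 hy0 (by have := hlow t ht; rw [hy]; linarith) (hxley t ht)
  obtain ⟨b, hb⟩ := hproj
  rcases le_or_gt |b| 2 with hbs | hbs
  · -- hard case: integral estimate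
    set r := e - 2 with hr
    have hr1 : (-1:ℝ) < r := by rw [hr]; linarith
    have hr0 : r < 0 := by rw [hr]; linarith
    have hshalf : (1:ℝ)/2 < s := by linarith
    have step1 : ∫ t in (0:ℝ)..1, (x t) ^ r ≤ ∫ t in (0:ℝ)..1, (1 + |t - b| * s) ^ r := by
      apply intervalIntegral.integral_mono_on (by norm_num) hInt
        ((cont_aux hs.le).intervalIntegrable 0 1)
      intro t _
      apply Real.rpow_le_rpow_of_nonpos (by positivity) (hb t) hr0.le
    have step2 := integral_abs_rpow_le hr1 hr0 hs hbs
    have hrp1 : (0:ℝ) < r + 1 := by linarith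
    have A2 : (1 + 3*s) ^ (r+1) ≤ (5*s) ^ (r+1) :=
      Real.rpow_le_rpow (by linarith) (by linarith) hrp1.le
    have A3 : (5*s) ^ (r+1) = 5 ^ (r+1) * s ^ (r+1) :=
      Real.mul_rpow (by norm_num) hs.le
    have A4 : (5:ℝ) ^ (r+1) ≤ 5 := by
      have := Real.rpow_le_rpow_of_exponent_le (by norm_num : (1:ℝ) ≤ 5) (by linarith : r+1 ≤ 1)
      rwa [Real.rpow_one] at this
    have A5 : s ^ (r+1) = s ^ r * s := Real.rpow_add_one (ne_of_gt hs) r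
    have A6 : s ^ r ≤ 3 * y ^ r := by
      apply mono_upper3 he1 hy0 (by rw [hy]; linarith) (by rw [hy]; linarith)
    have hsr : (0:ℝ) ≤ s ^ r := Real.rpow_nonneg hs.le r
    have hsrp : (0:ℝ) ≤ s ^ (r+1) := Real.rpow_nonneg hs.le _
    have T1 : 2 * (1 + 3*s) ^ (r+1) / (s * (r+1)) ≤ 2 * (5 * (s ^ r * s)) / (s * (r+1)) := by
      have hnum : (1 + 3*s) ^ (r+1) ≤ 5 * (s ^ r * s) := by nlinarith
      gcongr
    have T2 : 2 * (5 * (s ^ r * s)) / (s * (r+1)) = 10 * s ^ r / (r+1) := by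
      field_simp
      ring
    have T3 : 10 * s ^ r / (r+1) ≤ 10 * (3 * y ^ r) / (r+1) := by
      gcongr
    have T4 : 10 * (3 * y ^ r) / (r+1) = 30 / (r+1) * y ^ r := by ring
    have T5 : 30 / (r+1) ≤ 30 / (p-1) :=
      div_le_div_of_nonneg_left (by norm_num) (by linarith) (by rw [hr]; linarith)
    have hyrr : (0:ℝ) ≤ y ^ r := Real.rpow_nonneg hy0.le r
    calc ∫ t in (0:ℝ)..1, (x t) ^ r ≤ 2 * (1 + 3*s) ^ (r+1) / (s * (r+1)) :=
          le_trans step1 step2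
      _ ≤ 10 * s ^ r / (r+1) := by rw [← T2]; exact T1
      _ ≤ 30 / (r+1) * y ^ r := by rw [← T4]; exact T3
      _ ≤ 30 / (p-1) * y ^ r := by nlinarith
      _ ≤ (3 + 30 / (p - 1)) * y ^ r := by nlinarith
  · -- |b| large: pointwise
    apply finish 3 (by linarith)
    intro t ht
    apply mono_upper3 he1 hy0 _ (hxley t ht)
    have habs : (1:ℝ) ≤ |t - b| := by
      have h1 : |b| - |t| ≤ |b - t| := abs_sub_abs_le_abs_sub b t
      have h2 : |t| ≤ 1 := abs_le.mpr ⟨by linarith [ht.1], ht.2⟩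
      have : |b - t| = |t - b| := abs_sub_comm b t
      linarith
    have := hb t
    have : s ≤ |t - b| * s := le_mul_of_one_le_left hs.le habs
    rw [hy]
    nlinarith [hb t]

lemma key_interval {s σ y : ℝ} {x : ℝ → ℝ} (hσ : 1 ≤ σ) (hs : 0 < s) (hy : y = σ + s)
    (hx1 : ∀ t, 1 ≤ x t) (hlow : ∀ t ∈ Icc (0:ℝ) 1, σ - s ≤ x t)
    (hproj : ∃ b : ℝ, ∀ t, 1 + |t - b| * s ≤ x t) :
    ∃ j k : ℝ, 0 ≤ j ∧ j ≤ k ∧ k ≤ 1 ∧ 1/4 ≤ k - j ∧ ∀ t ∈ Icc j k, y / 12 ≤ x t := by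
  have hy0 : 0 < y := by rw [hy]; linarith
  rcases le_or_gt (2 * s) σ with hcase | hcase
  · refine ⟨0, 1, le_refl 0, by norm_num, le_refl 1, by norm_num, ?_⟩
    intro t ht
    have := hlow t ht
    rw [hy] at *
    linarith
  obtain ⟨b, hb⟩ := hproj
  have key : ∀ t : ℝ, 1/4 ≤ |t - b| → y / 12 ≤ x t := by
    intro t habs
    have h1 : (1/4) * s ≤ |t - b| * s := mul_le_mul_of_nonneg_right habs hs.le
    have := hb t
    rw [hy]
    linarith
  rcases le_or_gt b (1/2) with hbh | hbh
  · refine ⟨3/4, 1, by norm_num, by norm_num, le_refl 1, by norm_num, ?_⟩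
    intro t ht
    apply key
    rw [abs_of_nonneg (by linarith [ht.1])]
    linarith [ht.1]
  · refine ⟨0, 1/4, le_refl 0, by norm_num, by norm_num, by norm_num, ?_⟩
    intro t ht
    apply key
    rw [abs_of_nonpos (by linarith [ht.2])]
    linarith [ht.2]


/-- **Comparison of `|A(P) − A(Q)|` with the shifted function.** Let `H(s) = s^p + a·s^q`
with `1 < p ≤ q`, `a ≥ 0`, and let `A : ℝ^{N×n} → ℝ^{N×n}` be differentiable with
`|A(ξ)| + (1+|ξ|)|DA(ξ)| ≤ L·H'(1+|ξ|)` and `[DA(ξ)λ]:λ ≥ ν·H''(1+|ξ|)|λ|²`,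
`0 < ν ≤ L`. Then `|A(P) − A(Q)| ∼ H'_{1+|Q|}(|P−Q|)`, where
`H'_σ(s) = H'(σ+s)·s/(σ+s)`, with constants depending only on `p, q, ν, L`. -/
theorem A_difference_equivalence (N n : ℕ) (p q ν L : ℝ)
    (hp : 1 < p) (hpq : p ≤ q) (hν : 0 < ν) (hνL : ν ≤ L) :
    ∃ c : ℝ, 1 ≤ c ∧ ∀ a : ℝ, 0 ≤ a →
      ∀ A : EuclideanSpace ℝ (Fin N × Fin n) → EuclideanSpace ℝ (Fin N × Fin n),
        Differentiable ℝ A →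
        (∀ ξ : EuclideanSpace ℝ (Fin N × Fin n),
          ‖A ξ‖ + (1 + ‖ξ‖) * ‖fderiv ℝ A ξ‖ ≤ L * dpH' p q a (1 + ‖ξ‖)) →
        (∀ ξ lam : EuclideanSpace ℝ (Fin N × Fin n),
          ν * dpH'' p q a (1 + ‖ξ‖) * ‖lam‖ ^ 2 ≤ ⟪(fderiv ℝ A ξ) lam, lam⟫_ℝ) →
        ∀ P Q : EuclideanSpace ℝ (Fin N × Fin n),
          c⁻¹ * (dpH' p q a ((1 + ‖Q‖) + ‖P - Q‖) * ‖P - Q‖ / ((1 + ‖Q‖) + ‖P - Q‖)) ≤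
              ‖A P - A Q‖ ∧
            ‖A P - A Q‖ ≤
              c * (dpH' p q a ((1 + ‖Q‖) + ‖P - Q‖) * ‖P - Q‖ / ((1 + ‖Q‖) + ‖P - Q‖)) := by
  have hq1 : 1 < q := lt_of_lt_of_le hp hpq
  have hp1 : (0:ℝ) < p - 1 := by linarith
  have hL : 0 < L := lt_of_lt_of_le hν hνL
  have h12q : (0:ℝ) < (12:ℝ) ^ q := Real.rpow_pos_of_pos (by norm_num) q
  set C : ℝ := 3 + 30 / (p - 1) with hCdef
  have hC0 : 0 < C := by
    have : (0:ℝ) ≤ 30 / (p-1) := div_nonneg (by norm_num) hp1.le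
    rw [hCdef]; linarith
  set c : ℝ := 1 + L * C + 4 * (12:ℝ) ^ q / (ν * (p - 1)) with hcdef
  have hKpos : (0:ℝ) < 4 * (12:ℝ) ^ q / (ν * (p - 1)) := by positivity
  have hc1 : 1 ≤ c := by
    have hLC : 0 < L * C := mul_pos hL hC0
    rw [hcdef]; linarith [hKpos]
  have hcpos : (0:ℝ) < c := by linarith
  refine ⟨c, hc1, ?_⟩
  intro a ha A hA hGrow hMon P Q
  by_cases hPQ : P = Q
  · subst hPQ
    constructor <;> simp
  have hs : 0 < ‖P - Q‖ := by
    rw [norm_pos_iff]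
    exact sub_ne_zero.mpr hPQ
  set lam : EuclideanSpace ℝ (Fin N × Fin n) := P - Q with hlam
  set s := ‖lam‖ with hsdef
  set σ := 1 + ‖Q‖ with hσdef
  set y := σ + s with hydef
  have hσ1 : 1 ≤ σ := le_add_of_nonneg_right (norm_nonneg Q)
  have hy0 : 0 < y := by rw [hydef]; linarith
  set x : ℝ → ℝ := fun t => 1 + ‖Q + t • lam‖ with hxdef
  have hx1 : ∀ t, 1 ≤ x t := fun t => le_add_of_nonneg_right (norm_nonneg _)
  have hxpos : ∀ t, (0:ℝ) < x t := fun t => lt_of_lt_of_le one_pos (hx1 t)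
  have hpathc : Continuous fun t : ℝ => Q + t • lam :=
    continuous_const.add (continuous_id.smul continuous_const)
  have hxcont : Continuous x := continuous_const.add hpathc.norm
  have hsmul : ∀ t : ℝ, ‖t • lam‖ = |t| * s := fun t => by
    rw [norm_smul, Real.norm_eq_abs]
  have hxley : ∀ t ∈ Icc (0:ℝ) 1, x t ≤ y := by
    intro t ht
    have h1 : ‖Q + t • lam‖ ≤ ‖Q‖ + ‖t • lam‖ := norm_add_le _ _
    have h2 : |t| ≤ 1 := abs_le.mpr ⟨by linarith [ht.1], ht.2⟩
    have h3 : |t| * s ≤ s := mul_le_of_le_one_left (norm_nonneg lam) h2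
    rw [hsmul t] at h1
    rw [hydef, hσdef]
    show 1 + ‖Q + t • lam‖ ≤ 1 + ‖Q‖ + s
    linarith
  have hlow : ∀ t ∈ Icc (0:ℝ) 1, σ - s ≤ x t := by
    intro t ht
    have h1 : ‖Q‖ - ‖Q + t • lam‖ ≤ ‖Q - (Q + t • lam)‖ := norm_sub_norm_le _ _
    have h2 : ‖Q - (Q + t • lam)‖ = |t| * s := by
      rw [show Q - (Q + t • lam) = -(t • lam) by abel, norm_neg, hsmul t]
    have h3 : |t| ≤ 1 := abs_le.mpr ⟨by linarith [ht.1], ht.2⟩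
    have h4 : |t| * s ≤ s := mul_le_of_le_one_left (norm_nonneg lam) h3
    rw [h2] at h1
    rw [hσdef]
    show σ - s ≤ 1 + ‖Q + t • lam‖
    rw [hσdef]
    linarith
  have hproj : ∃ b : ℝ, ∀ t, 1 + |t - b| * s ≤ x t := by
    refine ⟨-(⟪Q, lam⟫_ℝ) / ‖lam‖ ^ 2, fun t => ?_⟩
    have := proj_lower Q lam hs t
    show 1 + |t - -⟪Q, lam⟫_ℝ / ‖lam‖ ^ 2| * s ≤ 1 + ‖Q + t • lam‖
    linarith
  -- the derivative along the segment
  set D : ℝ → EuclideanSpace ℝ (Fin N × Fin n) :=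
    fun t => fderiv ℝ A (Q + t • lam) lam with hDdef
  have hDmeas : Measurable D := by
    have h1 : Measurable (fun t : ℝ => fderiv ℝ A (Q + t • lam)) :=
      (measurable_fderiv ℝ A).comp hpathc.measurable
    exact (ContinuousLinearMap.apply ℝ
      (EuclideanSpace ℝ (Fin N × Fin n)) lam).continuous.measurable.comp h1
  have hDbound : ∀ t ∈ Icc (0:ℝ) 1,
      ‖D t‖ ≤ L * s * (p * x t ^ (p-2) + a * q * x t ^ (q-2)) := by
    intro t _
    have hxt : (0:ℝ) < x t := hxpos t
    have hxne : x t ≠ 0 := ne_of_gt hxt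
    have hg := hGrow (Q + t • lam)
    have hgx : ‖A (Q + t • lam)‖ + x t * ‖fderiv ℝ A (Q + t • lam)‖
        ≤ L * dpH' p q a (x t) := hg
    have hop : x t * ‖fderiv ℝ A (Q + t • lam)‖ ≤ L * dpH' p q a (x t) := by
      have := norm_nonneg (A (Q + t • lam))
      linarith
    have hle : ‖D t‖ ≤ ‖fderiv ℝ A (Q + t • lam)‖ * s :=
      ContinuousLinearMap.le_opNorm _ lam
    have e1 : x t ^ (p-1) = x t ^ (p-2) * x t := by
      rw [show p-1 = (p-2)+1 by ring, Real.rpow_add_one hxne]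
    have e2 : x t ^ (q-1) = x t ^ (q-2) * x t := by
      rw [show q-1 = (q-2)+1 by ring, Real.rpow_add_one hxne]
    have hxdiv : L * dpH' p q a (x t) = L * (p * x t ^ (p-2) + a * q * x t ^ (q-2)) * x t := by
      unfold dpH'
      rw [e1, e2]; ring
    rw [hxdiv] at hop
    have hopn : ‖fderiv ℝ A (Q + t • lam)‖ ≤ L * (p * x t ^ (p-2) + a * q * x t ^ (q-2)) := by
      rw [mul_comm (x t)] at hop
      exact le_of_mul_le_mul_right hop hxt
    calc ‖D t‖ ≤ ‖fderiv ℝ A (Q + t • lam)‖ * s := hle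
      _ ≤ L * (p * x t ^ (p-2) + a * q * x t ^ (q-2)) * s := by
          apply mul_le_mul_of_nonneg_right hopn hs.le
      _ = L * s * (p * x t ^ (p-2) + a * q * x t ^ (q-2)) := by ring
  have hIntp : IntervalIntegrable (fun t => x t ^ (p-2)) volume 0 1 :=
    (hxcont.rpow_const (fun t => Or.inl (ne_of_gt (hxpos t)))).intervalIntegrable 0 1
  have hIntq : IntervalIntegrable (fun t => x t ^ (q-2)) volume 0 1 :=
    (hxcont.rpow_const (fun t => Or.inl (ne_of_gt (hxpos t)))).intervalIntegrable 0 1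
  have hgcont : Continuous fun t => L * s * (p * x t ^ (p-2) + a * q * x t ^ (q-2)) := by
    apply continuous_const.mul
    exact (continuous_const.mul (hxcont.rpow_const (fun t => Or.inl (ne_of_gt (hxpos t))))).add
      (continuous_const.mul (hxcont.rpow_const (fun t => Or.inl (ne_of_gt (hxpos t)))))
  have hIntD : IntervalIntegrable D volume 0 1 := by
    rw [intervalIntegrable_iff, Set.uIoc_of_le zero_le_one]
    apply MeasureTheory.Integrable.mono'
      (g := fun t => L * s * (p * x t ^ (p-2) + a * q * x t ^ (q-2)))
    · exact hgcont.integrableOn_Ioc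
    · exact hDmeas.aestronglyMeasurable.restrict
    · rw [MeasureTheory.ae_restrict_iff' measurableSet_Ioc]
      exact MeasureTheory.ae_of_all _ fun t ht => hDbound t (Set.Ioc_subset_Icc_self ht)
  have hFTC : ∫ t in (0:ℝ)..1, D t = A P - A Q := by
    have hder : ∀ t ∈ Set.uIcc (0:ℝ) 1,
        HasDerivAt (fun u : ℝ => A (Q + u • lam)) (D t) t := by
      intro t _
      have hpath : HasDerivAt (fun u : ℝ => Q + u • lam) lam t := by
        simpa using ((hasDerivAt_id t).smul_const lam).const_add Q
      exact (hA (Q + t • lam)).hasFDerivAt.comp_hasDerivAt t hpath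
    rw [integral_eq_sub_of_hasDerivAt hder hIntD]
    rw [hlam]
    simp
  constructor
  · -- LOWER BOUND
    obtain ⟨j, k, hj0, hjk, hk1, hlen, hjkb⟩ := key_interval hσ1 hs hydef hx1 hlow hproj
    have hHc : Continuous fun t => dpH'' p q a (x t) := by
      unfold dpH''
      exact (continuous_const.mul (hxcont.rpow_const (fun t => Or.inl (ne_of_gt (hxpos t))))).add
        (continuous_const.mul (hxcont.rpow_const (fun t => Or.inl (ne_of_gt (hxpos t)))))
    have hIH : IntervalIntegrable (fun t => dpH'' p q a (x t)) volume 0 1 :=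
      hHc.intervalIntegrable 0 1
    set R : ℝ := 12 ^ (-q) * dpH'' p q a y with hRdef
    have hR0 : 0 ≤ R :=
      mul_nonneg (Real.rpow_nonneg (by norm_num) _) (dpH''_nonneg hp hpq ha hy0.le)
    have hstep : (1/4) * R ≤ ∫ t in (0:ℝ)..1, dpH'' p q a (x t) := by
      have hIcc : Set.Icc j k ⊆ Set.Icc (0:ℝ) 1 := Set.Icc_subset_Icc hj0 hk1
      have hmono : ∫ t in j..k, R ≤ ∫ t in j..k, dpH'' p q a (x t) := by
        apply intervalIntegral.integral_mono_on hjk intervalIntegrable_const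
          (hIH.mono_set (by rw [Set.uIcc_of_le hjk, Set.uIcc_of_le zero_le_one]; exact hIcc))
        intro t ht
        rw [hRdef]
        exact dpH''_lower hp hpq ha hy0 (hjkb t ht) (hxley t (hIcc ht))
      have hconstint : ∫ t in j..k, R = (k - j) * R := by
        rw [intervalIntegral.integral_const, smul_eq_mul]
      have hsub : ∫ t in j..k, dpH'' p q a (x t) ≤ ∫ t in (0:ℝ)..1, dpH'' p q a (x t) := by
        apply intervalIntegral.integral_mono_interval hj0 hjk hk1
        · exact MeasureTheory.ae_of_all _ fun t => dpH''_nonneg hp hpq ha (hxpos t).le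
        · exact hIH
      have hh : (1/4) * R ≤ (k - j) * R := mul_le_mul_of_nonneg_right hlen hR0
      linarith
    have hIntInner : IntervalIntegrable (fun t => ⟪lam, D t⟫_ℝ) volume 0 1 :=
      ⟨(innerSL ℝ lam).integrable_comp hIntD.1, (innerSL ℝ lam).integrable_comp hIntD.2⟩
    have h0 : ⟪A P - A Q, lam⟫_ℝ = ∫ t in (0:ℝ)..1, ⟪lam, D t⟫_ℝ := by
      rw [← hFTC, real_inner_comm]
      have hcomm := (innerSL ℝ lam).intervalIntegral_comp_comm hIntD
      simp only [innerSL_apply_apply] at hcomm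
      exact hcomm.symm
    have hpt : ∀ t ∈ Set.Icc (0:ℝ) 1, (ν * s^2) * dpH'' p q a (x t) ≤ ⟪lam, D t⟫_ℝ := by
      intro t _
      have h := hMon (Q + t • lam) lam
      rw [real_inner_comm]
      calc (ν * s^2) * dpH'' p q a (x t) = ν * dpH'' p q a (x t) * s^2 := by ring
        _ ≤ ⟪(fderiv ℝ A (Q + t • lam)) lam, lam⟫_ℝ := h
        _ = ⟪D t, lam⟫_ℝ := rfl
    have hmono2 : ∫ t in (0:ℝ)..1, (ν * s^2) * dpH'' p q a (x t)
        ≤ ∫ t in (0:ℝ)..1, ⟪lam, D t⟫_ℝ :=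
      intervalIntegral.integral_mono_on zero_le_one (hIH.const_mul _) hIntInner hpt
    have hconst2 : ∫ t in (0:ℝ)..1, (ν * s^2) * dpH'' p q a (x t)
        = (ν * s^2) * ∫ t in (0:ℝ)..1, dpH'' p q a (x t) :=
      intervalIntegral.integral_const_mul _ _
    have hCS : ⟪A P - A Q, lam⟫_ℝ ≤ ‖A P - A Q‖ * s := real_inner_le_norm (A P - A Q) lam
    have hns2 : 0 ≤ ν * s^2 := by positivity
    have key1 : (ν * s^2) * ((1/4) * R) ≤ ‖A P - A Q‖ * s := by
      calc (ν * s^2) * ((1/4) * R)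
          ≤ (ν * s^2) * ∫ t in (0:ℝ)..1, dpH'' p q a (x t) :=
            mul_le_mul_of_nonneg_left hstep hns2
        _ = ∫ t in (0:ℝ)..1, (ν * s^2) * dpH'' p q a (x t) := hconst2.symm
        _ ≤ ∫ t in (0:ℝ)..1, ⟪lam, D t⟫_ℝ := hmono2
        _ = ⟪A P - A Q, lam⟫_ℝ := h0.symm
        _ ≤ ‖A P - A Q‖ * s := hCS
    have key2 : ν * s * ((1/4) * R) ≤ ‖A P - A Q‖ := by
      have hre : (ν * s^2) * ((1/4) * R) = (ν * s * ((1/4) * R)) * s := by ring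
      rw [hre] at key1
      exact le_of_mul_le_mul_right key1 hs
    have hdd := dpH'_le_mul_dpH'' hp hpq ha hy0
    have hdd' : (p-1) * dpH' p q a y / y ≤ dpH'' p q a y := by
      rw [div_le_iff₀ hy0]
      calc (p-1) * dpH' p q a y ≤ y * dpH'' p q a y := hdd
        _ = dpH'' p q a y * y := mul_comm _ _
    have h12 : (12:ℝ) ^ (-q) = ((12:ℝ) ^ q)⁻¹ := Real.rpow_neg (by norm_num) q
    have hKlow : c⁻¹ ≤ ν * (p-1) / (4 * 12 ^ q) := by
      apply inv_le_of_inv_le₀ (by positivity)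
      have hinv : (ν * (p-1) / (4 * 12 ^ q))⁻¹ = 4 * 12 ^ q / (ν * (p-1)) := by
        rw [inv_div]
      rw [hinv, hcdef]
      have hLC : 0 < L * C := mul_pos hL hC0
      linarith
    have hT0 : 0 ≤ dpH' p q a y * s / y :=
      div_nonneg (mul_nonneg (dpH'_nonneg hp hpq ha hy0.le) hs.le) hy0.le
    have hfin2 : (ν * (p-1) / (4 * 12^q)) * (dpH' p q a y * s / y)
        ≤ ν * s * ((1/4) * R) := by
      have e1 : (ν * (p-1) / (4 * 12^q)) * (dpH' p q a y * s / y)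
          = (ν * s / (4 * 12^q)) * ((p-1) * dpH' p q a y / y) := by
        field_simp
      have e2 : ν * s * ((1/4) * R) = (ν * s / (4 * 12^q)) * dpH'' p q a y := by
        rw [hRdef, h12]
        field_simp
      rw [e1, e2]
      exact mul_le_mul_of_nonneg_left hdd' (by positivity)
    calc c⁻¹ * (dpH' p q a y * s / y)
        ≤ (ν * (p-1) / (4 * 12^q)) * (dpH' p q a y * s / y) :=
          mul_le_mul_of_nonneg_right hKlow hT0
      _ ≤ ν * s * ((1/4) * R) := hfin2
      _ ≤ ‖A P - A Q‖ := key2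
  · -- UPPER BOUND
    rw [← hFTC]
    have h1 : ‖∫ t in (0:ℝ)..1, D t‖ ≤ ∫ t in (0:ℝ)..1, ‖D t‖ :=
      intervalIntegral.norm_integral_le_integral_norm zero_le_one
    have h2 : ∫ t in (0:ℝ)..1, ‖D t‖
        ≤ ∫ t in (0:ℝ)..1, L * s * (p * x t ^ (p-2) + a * q * x t ^ (q-2)) :=
      intervalIntegral.integral_mono_on zero_le_one hIntD.norm
        (hgcont.intervalIntegrable 0 1) hDbound
    have hIp := UP hp (le_refl p) hσ1 hs hydef hxcont hx1 hxley hlow hproj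
    have hIq := UP hp hpq hσ1 hs hydef hxcont hx1 hxley hlow hproj
    have h3 : ∫ t in (0:ℝ)..1, L * s * (p * x t ^ (p-2) + a * q * x t ^ (q-2))
        = L * s * (p * (∫ t in (0:ℝ)..1, x t ^ (p-2))
            + a * q * (∫ t in (0:ℝ)..1, x t ^ (q-2))) := by
      rw [intervalIntegral.integral_const_mul,
        intervalIntegral.integral_add (hIntp.const_mul p) (hIntq.const_mul (a*q)),
        intervalIntegral.integral_const_mul, intervalIntegral.integral_const_mul]
    have hIp0 : 0 ≤ ∫ t in (0:ℝ)..1, x t ^ (p-2) := by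
      apply intervalIntegral.integral_nonneg zero_le_one
      intro u _; exact Real.rpow_nonneg (hxpos u).le _
    have hIq0 : 0 ≤ ∫ t in (0:ℝ)..1, x t ^ (q-2) := by
      apply intervalIntegral.integral_nonneg zero_le_one
      intro u _; exact Real.rpow_nonneg (hxpos u).le _
    have h4 : L * s * (p * (∫ t in (0:ℝ)..1, x t ^ (p-2))
            + a * q * (∫ t in (0:ℝ)..1, x t ^ (q-2)))
        ≤ L * s * (p * (C * y ^ (p-2)) + a * q * (C * y ^ (q-2))) := by
      have hLs : 0 ≤ L * s := by positivity
      have c1 : 0 ≤ p := by linarith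
      have c2 : 0 ≤ a * q := mul_nonneg ha (by linarith)
      have t1 := mul_le_mul_of_nonneg_left hIp c1
      have t2 := mul_le_mul_of_nonneg_left hIq c2
      apply mul_le_mul_of_nonneg_left _ hLs
      rw [hCdef] at *
      linarith
    have h5 : L * s * (p * (C * y ^ (p-2)) + a * q * (C * y ^ (q-2)))
        = L * C * (dpH' p q a y * s / y) := by
      have hyne : y ≠ 0 := ne_of_gt hy0
      have e1 : y ^ (p-1) = y ^ (p-2) * y := by
        rw [show p-1 = (p-2)+1 by ring, Real.rpow_add_one hyne]
      have e2 : y ^ (q-1) = y ^ (q-2) * y := by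
        rw [show q-1 = (q-2)+1 by ring, Real.rpow_add_one hyne]
      unfold dpH'
      rw [e1, e2]
      field_simp
    have hT0 : 0 ≤ dpH' p q a y * s / y :=
      div_nonneg (mul_nonneg (dpH'_nonneg hp hpq ha hy0.le) hs.le) hy0.le
    have hfinal : L * C * (dpH' p q a y * s / y) ≤ c * (dpH' p q a y * s / y) := by
      apply mul_le_mul_of_nonneg_right _ hT0
      rw [hcdef]
      linarith [hKpos]
    exact le_trans h1 (le_trans h2 (le_trans (le_of_eq h3)
      (le_trans h4 (le_trans (le_of_eq h5) hfinal))))
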